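/- Let Ω ⊂ ℝ^n be a bounded open set, let E ⊂ Ω be a nonempty subset that is closed in Ω (so Ω \ E is open), and let m ≥ 0 be an integer. Suppose f : ℝ^n → ℂ is C^m on Ω \ E and g : ℝ^n → ℂ is C^m on Ω with all iterated derivatives of order ≤ m bounded on Ω. Assume there is C > 0 with |g(x)| ≤ C · dist(x, E) for all x ∈ Ω, and that for every k with 0 ≤ k ≤ m there are constants B_k > 0 and p(k) ≥ 0 such that the k-th iterated derivative of f satisfies ‖D^k f(x)‖ ≤ B_k · dist(x, E)^{−p(k)} for all x ∈ Ω \ E. Then there exists a natural number L such that the function h : Ω → ℂ defined by h = f · g^L on Ω \ E and h = 0 on E is C^m on Ω with all iterated derivatives of order ≤ m bounded on Ω. -/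

import Mathlib

open Metric Set Filter



lemma aux_rpow {d D a b c : ℝ} (hd : 0 < d) (hdD : d ≤ D) (hD : 1 ≤ D)
    (hab : b ≤ a) (habc : a - b ≤ c) : d ^ a ≤ D ^ c * d ^ b := by
  have h1 : d ^ a = d ^ (a - b) * d ^ b := by
    rw [← Real.rpow_add hd]; congr 1; ring
  rw [h1]
  refine mul_le_mul_of_nonneg_right ?_ (Real.rpow_nonneg hd.le b)
  exact le_trans (Real.rpow_le_rpow hd.le hdD (by linarith))
    (Real.rpow_le_rpow_of_exponent_le hD habc)

lemma zero_ext_hasFDeriv {X F : Type*} [NormedAddCommGroup X] [NormedSpace ℝ X]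
    [NormedAddCommGroup F] [NormedSpace ℝ F]
    {Ω E : Set X} (hΩo : IsOpen Ω) (hEΩ : E ⊆ Ω) (hΩEo : IsOpen (Ω \ E))
    (hEne : E.Nonempty)
    {v : X → F} {K : ℝ} (hK : 0 ≤ K)
    (hdpos : ∀ x ∈ Ω \ E, 0 < infDist x E)
    (hv0 : ∀ x ∈ E, v x = 0)
    (hvd : ∀ x ∈ Ω \ E, DifferentiableAt ℝ v x)
    (hvb : ∀ x ∈ Ω \ E, ‖v x‖ ≤ K * infDist x E)
    (hvD : ∀ x ∈ Ω \ E, ‖fderiv ℝ v x‖ ≤ K * infDist x E)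
    {a : X} (ha : a ∈ E) : HasFDerivWithinAt v (0 : X →L[ℝ] F) Ω a := by
  obtain ⟨r, hr, hball⟩ := Metric.isOpen_iff.1 hΩo a (hEΩ ha)
  have key : ∀ x ∈ Ω, dist x a < r/4 → ‖v x‖ ≤ 4 * K * (dist x a)^2 := by
    intro x hxΩ hxr
    by_cases hxE : x ∈ E
    · rw [hv0 x hxE, norm_zero]; positivity
    · set d := infDist x E with hd_def
      have hxmem : x ∈ Ω \ E := ⟨hxΩ, hxE⟩
      have hd : 0 < d := hdpos x hxmem
      have hda : d ≤ dist x a := infDist_le_dist_of_mem ha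
      obtain ⟨e, heE, hxe⟩ := (infDist_lt_iff hEne).1 (show infDist x E < 2*d by
        rw [← hd_def]; linarith)
      have heΩ : e ∈ ball a r := by
        rw [mem_ball]
        have h1 := dist_triangle e x a
        rw [dist_comm e x] at h1
        linarith
      have hxball : x ∈ ball a r := by rw [mem_ball]; linarith
      have hseg : segment ℝ e x ⊆ Ω := fun y hy =>
        hball ((convex_ball a r).segment_subset heΩ hxball hy)
      set γ : ℝ → X := fun t => AffineMap.lineMap e x t with hγdef
      have hγ0 : γ 0 = e := AffineMap.lineMap_apply_zero e x
      have hγ1 : γ 1 = x := AffineMap.lineMap_apply_one e x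
      have hγseg : ∀ t ∈ Icc (0:ℝ) 1, γ t ∈ segment ℝ e x := by
        intro t ht
        rw [segment_eq_image_lineMap]; exact mem_image_of_mem _ ht
      set T : Set ℝ := {t | t ∈ Icc (0:ℝ) 1 ∧ γ t ∈ E} with hTdef
      have hTne : T.Nonempty := ⟨0, ⟨le_refl 0, zero_le_one⟩, by rw [hγ0]; exact heE⟩
      have hTbdd : BddAbove T := BddAbove.mono (fun t ht => ht.1) bddAbove_Icc
      have hTclosed : IsClosed T := by
        have hTeq : T = Icc (0:ℝ) 1 ∩ (γ ⁻¹' (Ω \ E))ᶜ := by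
          ext t
          simp only [hTdef, mem_inter_iff, mem_compl_iff, mem_preimage, mem_setOf_eq]
          constructor
          · rintro ⟨ht, htE⟩; exact ⟨ht, fun hmem => hmem.2 htE⟩
          · rintro ⟨ht, hn⟩
            refine ⟨ht, ?_⟩
            have hmem : γ t ∈ Ω := hseg (hγseg t ht)
            by_contra hE'
            exact hn ⟨hmem, hE'⟩
        rw [hTeq]
        exact isClosed_Icc.inter
          ((hΩEo.preimage AffineMap.lineMap_continuous).isClosed_compl)
      set t₀ : ℝ := sSup T with ht₀def
      have ht₀T : t₀ ∈ T := hTclosed.csSup_mem hTne hTbdd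
      have ht₀0 : 0 ≤ t₀ := ht₀T.1.1
      have ht₀1 : t₀ < 1 := by
        rcases lt_or_eq_of_le ht₀T.1.2 with h | h
        · exact h
        · exfalso; apply hxE; rw [← hγ1, ← h]; exact ht₀T.2
      have hy0E : γ t₀ ∈ E := ht₀T.2
      have hdex : dist e x < 2*d := by rw [dist_comm]; exact hxe
      have hmain : ∀ s ∈ Ioc t₀ 1, ‖v x‖ ≤ 4*K*d^2 + K * (s - t₀) * (2*d) := by
        intro s hs
        have himg : segment ℝ (γ s) x = γ '' Icc s 1 := by
          rw [← hγ1, ← segment_eq_Icc hs.2, hγdef]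
          exact (image_segment ℝ (AffineMap.lineMap e x) s 1).symm
        have hsub : ∀ y ∈ segment ℝ (γ s) x, y ∈ Ω \ E := by
          intro y hy
          rw [himg] at hy
          obtain ⟨t, ht, rfl⟩ := hy
          have ht01 : t ∈ Icc (0:ℝ) 1 := ⟨by linarith [ht.1, hs.1], ht.2⟩
          refine ⟨hseg (hγseg t ht01), fun hE' => ?_⟩
          have htT : t ∈ T := ⟨ht01, hE'⟩
          have : t ≤ t₀ := le_csSup hTbdd htT
          linarith [ht.1, hs.1]
        have hsub2 : ∀ y ∈ segment ℝ (γ s) x, ‖fderiv ℝ v y‖ ≤ K * (2*d) := by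
          intro y hy
          have hyd := hsub y hy
          refine le_trans (hvD y hyd) ?_
          have h2 : infDist y E ≤ dist y (γ t₀) := infDist_le_dist_of_mem hy0E
          rw [himg] at hy
          obtain ⟨t, ht, rfl⟩ := hy
          have h3 : dist (γ t) (γ t₀) = dist t t₀ * dist e x := by
            rw [hγdef]; exact dist_lineMap_lineMap e x t t₀
          have h4 : dist t t₀ ≤ 1 := by
            rw [Real.dist_eq, abs_le]
            constructor <;> [linarith [ht.1, ht.2, hs.1, ht₀0]; linarith [ht.1, ht.2, hs.1, ht₀0]]
          have h5 : dist (γ t) (γ t₀) ≤ 2*d := by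
            rw [h3]
            calc dist t t₀ * dist e x ≤ 1 * (2*d) :=
              mul_le_mul h4 hdex.le dist_nonneg zero_le_one
            _ = 2*d := one_mul _
          exact mul_le_mul_of_nonneg_left (le_trans h2 h5) hK
        have hmvt := (convex_segment (γ s) x).norm_image_sub_le_of_norm_fderiv_le
          (fun y hy => hvd y (hsub y hy)) hsub2
          (left_mem_segment ℝ (γ s) x) (right_mem_segment ℝ (γ s) x)
        have hxgs : ‖x - γ s‖ ≤ 2*d := by
          rw [← dist_eq_norm, ← hγ1]
          have h3 : dist (γ 1) (γ s) = dist (1:ℝ) s * dist e x := by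
            rw [hγdef]; exact dist_lineMap_lineMap e x 1 s
          rw [h3]
          have h4 : dist (1:ℝ) s ≤ 1 := by
            rw [Real.dist_eq, abs_le]
            constructor <;> [linarith [hs.1, hs.2]; linarith [hs.1, hs.2]]
          calc dist (1:ℝ) s * dist e x ≤ 1 * (2*d) :=
            mul_le_mul h4 hdex.le dist_nonneg zero_le_one
          _ = 2*d := one_mul _
        have hgs : ‖v (γ s)‖ ≤ K * (s - t₀) * (2*d) := by
          have h2 := hvb (γ s) (hsub (γ s) (left_mem_segment ℝ (γ s) x))
          have h3 : infDist (γ s) E ≤ dist (γ s) (γ t₀) := infDist_le_dist_of_mem hy0E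
          have h4 : dist (γ s) (γ t₀) = dist s t₀ * dist e x := by
            rw [hγdef]; exact dist_lineMap_lineMap e x s t₀
          have h5 : dist s t₀ = s - t₀ := by
            rw [Real.dist_eq, abs_of_nonneg (by linarith [hs.1])]
          calc ‖v (γ s)‖ ≤ K * infDist (γ s) E := h2
            _ ≤ K * ((s - t₀) * (2*d)) := by
                refine mul_le_mul_of_nonneg_left ?_ hK
                refine le_trans h3 ?_
                rw [h4, h5]
                exact mul_le_mul_of_nonneg_left hdex.le (by linarith [hs.1])
            _ = K * (s - t₀) * (2*d) := by ring
        have htri : ‖v x‖ ≤ ‖v x - v (γ s)‖ + ‖v (γ s)‖ := by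
          have := norm_add_le (v x - v (γ s)) (v (γ s))
          simpa using this
        have hfin : ‖v x - v (γ s)‖ ≤ 4*K*d^2 := by
          refine le_trans hmvt ?_
          calc K * (2*d) * ‖x - γ s‖ ≤ K * (2*d) * (2*d) :=
            mul_le_mul_of_nonneg_left hxgs (by positivity)
          _ = 4*K*d^2 := by ring
        linarith
      have hvx : ‖v x‖ ≤ 4*K*d^2 := by
        refine le_of_forall_pos_le_add ?_
        intro ε hε
        set δ : ℝ := ε / (2*K*d + 1) with hδdef
        have hδ : 0 < δ := by positivity
        have hsIoc : min 1 (t₀ + δ) ∈ Ioc t₀ 1 :=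
          ⟨lt_min ht₀1 (by linarith), min_le_left _ _⟩
        have h1 := hmain _ hsIoc
        have hsd : min 1 (t₀ + δ) - t₀ ≤ δ := by
          have := min_le_right 1 (t₀ + δ); linarith
        have h2 : K * (min 1 (t₀ + δ) - t₀) * (2*d) ≤ ε := by
          have h3 : K * (min 1 (t₀ + δ) - t₀) * (2*d) ≤ K * δ * (2*d) := by
            have hnn : 0 ≤ min 1 (t₀ + δ) - t₀ := by linarith [hsIoc.1]
            exact mul_le_mul_of_nonneg_right (mul_le_mul_of_nonneg_left hsd hK) (by positivity)
          have h4 : K * δ * (2*d) ≤ ε := by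
            have h5 : K * δ * (2*d) = ε * ((2*K*d) / (2*K*d + 1)) := by
              rw [hδdef]; ring
            have h6 : (2*K*d) / (2*K*d + 1) ≤ 1 := by
              rw [div_le_one (by positivity)]; linarith
            rw [h5]
            calc ε * ((2*K*d) / (2*K*d + 1)) ≤ ε * 1 :=
              mul_le_mul_of_nonneg_left h6 hε.le
            _ = ε := mul_one _
          linarith
        linarith
      have : d^2 ≤ (dist x a)^2 := by nlinarith [infDist_nonneg (s := E) (x := x)]
      nlinarith
  refine hasFDerivWithinAt_iff_isLittleO.2 ?_
  rw [Asymptotics.isLittleO_iff]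
  intro c hc
  have hmem : Ω ∩ ball a (min (r/4) (c/(4*K+1))) ∈ nhdsWithin a Ω :=
    inter_mem_nhdsWithin Ω (ball_mem_nhds a (by positivity))
  filter_upwards [hmem] with x hx
  simp only [hv0 a ha, sub_zero, ContinuousLinearMap.zero_apply]
  have hb := mem_ball.1 hx.2
  have hd1 : dist x a < r/4 := lt_of_lt_of_le hb (min_le_left _ _)
  have hd2 : dist x a < c/(4*K+1) := lt_of_lt_of_le hb (min_le_right _ _)
  have hk := key x hx.1 hd1
  rw [← dist_eq_norm]
  have hd3 : dist x a * (4*K+1) < c := by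
    rw [← lt_div_iff₀ (by positivity)]; exact hd2
  nlinarith [dist_nonneg (x := x) (y := a), hc]
set_option maxHeartbeats 2000000 in
/-- If `f` is `C^m` on `Ω \ E` with derivatives blowing up at a finite
negative power of `dist(·, E)`, and `g` is `C^m` on `Ω` with bounded derivatives and
`|g| ≤ C dist(·, E)`, then for some `L` the function equal to `f g^L` off `E` and `0` on `E`
is `C^m` on `Ω` with bounded derivatives. -/
theorem vanishing_power_smooth_extension (n m : ℕ)
    (Ω E : Set (EuclideanSpace ℝ (Fin n)))
    (hΩo : IsOpen Ω) (hΩb : Bornology.IsBounded Ω)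
    (hEne : E.Nonempty) (hEΩ : E ⊆ Ω) (hEcl : IsOpen (Ω \ E))
    (f g : EuclideanSpace ℝ (Fin n) → ℂ)
    (hf : ContDiffOn ℝ m f (Ω \ E))
    (hg : ContDiffOn ℝ m g Ω)
    (hgb : ∀ k ≤ m, ∃ B : ℝ, ∀ x ∈ Ω, ‖iteratedFDerivWithin ℝ k g Ω x‖ ≤ B)
    (C : ℝ) (hC : 0 < C) (hgE : ∀ x ∈ Ω, ‖g x‖ ≤ C * infDist x E)
    (hfd : ∀ k ≤ m, ∃ B : ℝ, 0 < B ∧ ∃ p : ℝ, 0 ≤ p ∧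
      ∀ x ∈ Ω \ E, ‖iteratedFDerivWithin ℝ k f (Ω \ E) x‖ ≤ B * infDist x E ^ (-p)) :
    ∃ (L : ℕ) (h : EuclideanSpace ℝ (Fin n) → ℂ),
      (∀ x ∈ Ω \ E, h x = f x * g x ^ L) ∧ (∀ x ∈ E, h x = 0) ∧
      ContDiffOn ℝ m h Ω ∧
      ∀ k ≤ m, ∃ B : ℝ, ∀ x ∈ Ω, ‖iteratedFDerivWithin ℝ k h Ω x‖ ≤ B := by
  classical
  obtain ⟨e₀, he₀⟩ := hEne
  have uΩ : UniqueDiffOn ℝ Ω := hΩo.uniqueDiffOn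
  have uΩE : UniqueDiffOn ℝ (Ω \ E) := hEcl.uniqueDiffOn
  have hdpos : ∀ x ∈ Ω \ E, 0 < infDist x E := by
    intro x hx
    refine lt_of_le_of_ne infDist_nonneg (fun h0 => ?_)
    have hxc : x ∈ closure E := (Metric.mem_closure_iff_infDist_zero ⟨e₀, he₀⟩).2 h0.symm
    obtain ⟨y, hyo, hyE⟩ := _root_.mem_closure_iff.1 hxc (Ω \ E) hEcl hx
    exact hyo.2 hyE
  obtain ⟨R, hR⟩ := hΩb.subset_closedBall e₀
  set D : ℝ := max 1 R with hDdef
  have hD1 : 1 ≤ D := le_max_left _ _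
  have hD0 : 0 < D := lt_of_lt_of_le one_pos hD1
  have hDd : ∀ x ∈ Ω, infDist x E ≤ D := by
    intro x hx
    refine le_trans (infDist_le_dist_of_mem he₀) (le_trans ?_ (le_max_right 1 R))
    exact mem_closedBall.1 (hR hx)
  -- bounds for g derivatives
  have hgb' : ∀ j : ℕ, ∃ B : ℝ, j ≤ m → ∀ x ∈ Ω, ‖iteratedFDerivWithin ℝ j g Ω x‖ ≤ B := by
    intro j; by_cases hj : j ≤ m
    · obtain ⟨B, hB⟩ := hgb j hj; exact ⟨B, fun _ => hB⟩
    · exact ⟨0, fun h => absurd h hj⟩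
  choose Bg hBg using hgb'
  have hmne : (Finset.range (m+1)).Nonempty := ⟨0, Finset.mem_range.2 (Nat.succ_pos m)⟩
  set G : ℝ := max (max 1 C) ((Finset.range (m+1)).sup' hmne Bg) with hGdef
  have hG1 : 1 ≤ G := le_trans (le_max_left 1 C) (le_max_left _ _)
  have hG0 : 0 < G := lt_of_lt_of_le one_pos hG1
  have hGC : C ≤ G := le_trans (le_max_right 1 C) (le_max_left _ _)
  have hGb : ∀ j ≤ m, ∀ x ∈ Ω, ‖iteratedFDerivWithin ℝ j g Ω x‖ ≤ G := by
    intro j hj x hx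
    refine le_trans (hBg j hj x hx) (le_trans ?_ (le_max_right _ _))
    exact Finset.le_sup' Bg (Finset.mem_range.2 (Nat.lt_succ_of_le hj))
  -- the power bounds
  have hpow : ∀ N : ℕ, ∃ c : ℝ, 0 < c ∧ ∀ j ≤ m, ∀ x ∈ Ω \ E,
      ‖iteratedFDerivWithin ℝ j (fun y => g y ^ N) Ω x‖
        ≤ c * infDist x E ^ ((N:ℝ) - (j:ℕ)) := by
    intro N
    induction N with
    | zero =>
      refine ⟨D ^ (m:ℝ), Real.rpow_pos_of_pos hD0 _, ?_⟩
      intro j hj x hx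
      have hd := hdpos x hx
      have hDm1 : 1 ≤ D ^ (m:ℝ) := Real.one_le_rpow hD1 (Nat.cast_nonneg m)
      match j, hj with
      | 0, _ =>
        simp only [pow_zero, norm_iteratedFDerivWithin_zero, norm_one,
          Nat.cast_zero, Nat.cast_ofNat, sub_zero, Real.rpow_zero, mul_one]
        exact hDm1
      | (j+1), hj =>
        simp only [pow_zero]
        rw [iteratedFDerivWithin_const_of_ne (Nat.succ_ne_zero j) _ Ω, Pi.zero_apply]
        rw [norm_zero]
        exact mul_nonneg (Real.rpow_nonneg hD0.le _) (Real.rpow_nonneg infDist_nonneg _)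
    | succ N ih =>
      obtain ⟨c, hc, hcb⟩ := ih
      set A : ℝ := (C + G) * c * D ^ (m:ℝ) with hAdef
      have hA0 : 0 < A := by positivity
      refine ⟨2^m * A, by positivity, ?_⟩
      intro j hj x hx
      have hd := hdpos x hx
      have hdD : infDist x E ≤ D := hDd x hx.1
      have heq : (fun y => g y ^ (N+1)) = fun y => g y * g y ^ N := by
        funext y; rw [pow_succ']
      rw [heq]
      have hmul := norm_iteratedFDerivWithin_mul_le (𝕜 := ℝ)
        (hg.of_le le_rfl) ((hg.pow N).of_le le_rfl) uΩ hx.1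
        (n := j) (by exact_mod_cast hj)
      refine le_trans hmul ?_
      have hterm : ∀ i ∈ Finset.range (j+1),
          (j.choose i : ℝ) * ‖iteratedFDerivWithin ℝ i g Ω x‖ *
            ‖iteratedFDerivWithin ℝ (j-i) (fun y => g y ^ N) Ω x‖
          ≤ (j.choose i : ℝ) * (A * infDist x E ^ (((N:ℕ)+1:ℝ) - (j:ℕ))) := by
        intro i hi
        have hij : i ≤ j := Nat.lt_succ_iff.1 (Finset.mem_range.1 hi)
        have hji : ((j - i : ℕ) : ℝ) = (j:ℝ) - (i:ℝ) := by
          push_cast [Nat.cast_sub hij]; ring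
        have hgN := hcb (j-i) (le_trans (Nat.sub_le j i) hj) x hx
        rw [hji] at hgN
        rcases Nat.eq_zero_or_pos i with hi0 | hi1
        · subst hi0
          simp only [norm_iteratedFDerivWithin_zero, Nat.cast_zero, sub_zero]
          have h1 : ‖g x‖ * ‖iteratedFDerivWithin ℝ (j-0) (fun y => g y ^ N) Ω x‖
              ≤ (C * infDist x E) * (c * infDist x E ^ ((N:ℝ) - ((j:ℝ) - 0))) := by
            apply mul_le_mul (hgE x hx.1) _ (norm_nonneg _) (by positivity)
            simpa using hgN
          rw [mul_assoc]
          refine le_trans (mul_le_mul_of_nonneg_left h1 (Nat.cast_nonneg _)) ?_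
          apply mul_le_mul_of_nonneg_left _ (Nat.cast_nonneg _)
          have h2 : C * infDist x E * (c * infDist x E ^ ((N:ℝ) - ((j:ℝ) - 0)))
              = (C * c) * (infDist x E * infDist x E ^ ((N:ℝ) - (j:ℝ))) := by ring_nf
          rw [h2]
          have h3 : infDist x E ^ (((N:ℕ)+1:ℝ) - (j:ℕ))
              = infDist x E * infDist x E ^ ((N:ℝ) - (j:ℝ)) := by
            rw [show ((((N:ℕ)):ℝ)+1) - ((j:ℕ):ℝ) = 1 + ((N:ℝ) - (j:ℝ)) by push_cast; ring,
              Real.rpow_add hd, Real.rpow_one]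
          rw [← h3]
          have hCc : C * c ≤ A := by
            have h4 : 1 ≤ D ^ (m:ℝ) := Real.one_le_rpow hD1 (Nat.cast_nonneg m)
            calc C * c ≤ (C+G) * c := by nlinarith
              _ ≤ (C+G) * c * D^(m:ℝ) := le_mul_of_one_le_right (by positivity) h4
              _ = A := by rw [hAdef]
          exact mul_le_mul_of_nonneg_right hCc (by positivity)
        · have hgi := hGb i (le_trans hij hj) x hx.1
          have h2 : infDist x E ^ ((N:ℝ) - ((j:ℝ) - (i:ℝ)))
              ≤ D ^ (m:ℝ) * infDist x E ^ (((N:ℕ)+1:ℝ) - (j:ℕ)) := by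
            apply aux_rpow hd hdD hD1
            · push_cast
              have : (1:ℝ) ≤ i := by exact_mod_cast hi1
              linarith
            · push_cast
              have h5 : (i:ℝ) ≤ m := by exact_mod_cast le_trans hij hj
              linarith
          calc (j.choose i : ℝ) * ‖iteratedFDerivWithin ℝ i g Ω x‖ *
                ‖iteratedFDerivWithin ℝ (j-i) (fun y => g y ^ N) Ω x‖
              ≤ ((j.choose i : ℝ) * G) * (c * infDist x E ^ ((N:ℝ) - ((j:ℝ) - (i:ℝ)))) := by
                refine mul_le_mul (mul_le_mul_of_nonneg_left hgi (Nat.cast_nonneg _)) hgN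
                  (norm_nonneg _) (mul_nonneg (Nat.cast_nonneg _) hG0.le)
            _ ≤ ((j.choose i : ℝ) * G) *
                  (c * (D ^ (m:ℝ) * infDist x E ^ (((N:ℕ)+1:ℝ) - (j:ℕ)))) := by
                refine mul_le_mul_of_nonneg_left (mul_le_mul_of_nonneg_left h2 hc.le)
                  (mul_nonneg (Nat.cast_nonneg _) hG0.le)
            _ = (j.choose i : ℝ) *
                  ((G * c * D ^ (m:ℝ)) * infDist x E ^ (((N:ℕ)+1:ℝ) - (j:ℕ))) := by ring
            _ ≤ (j.choose i : ℝ) * (A * infDist x E ^ (((N:ℕ)+1:ℝ) - (j:ℕ))) := by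
                refine mul_le_mul_of_nonneg_left ?_ (Nat.cast_nonneg _)
                refine mul_le_mul_of_nonneg_right ?_ (Real.rpow_pos_of_pos hd _).le
                rw [hAdef]
                have h4 : 0 < D ^ (m:ℝ) := Real.rpow_pos_of_pos hD0 _
                nlinarith [mul_pos (mul_pos hC hc) h4]
      refine le_trans (Finset.sum_le_sum hterm) ?_
      rw [← Finset.sum_mul]
      have hsum : ∑ i ∈ Finset.range (j+1), (j.choose i : ℝ) = 2^j := by
        rw [← Nat.cast_sum]
        rw [Nat.sum_range_choose]
        push_cast; ring
      rw [hsum]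
      have h7 : (2:ℝ)^j ≤ 2^m := by
        apply pow_le_pow_right₀ one_le_two hj
      have h8 : (0:ℝ) < A * infDist x E ^ (((N:ℕ)+1:ℝ) - (j:ℕ)) := by
        have := Real.rpow_pos_of_pos hd ((((N:ℕ):ℝ)+1) - (j:ℕ))
        positivity
      calc (2:ℝ)^j * (A * infDist x E ^ (((N:ℕ)+1:ℝ) - (j:ℕ)))
          ≤ 2^m * (A * infDist x E ^ (((N:ℕ)+1:ℝ) - (j:ℕ))) :=
            mul_le_mul_of_nonneg_right h7 h8.le
        _ = 2^m * A * infDist x E ^ (((N:ℕ)+1:ℝ) - (j:ℕ)) := by ring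
        _ = 2^m * A * infDist x E ^ ((((N+1:ℕ)):ℝ) - (j:ℕ)) := by push_cast; ring_nf

  -- bounds for f derivatives: uniform constants
  have hfd' : ∀ k : ℕ, ∃ B : ℝ, 0 < B ∧ ∃ q : ℝ, 0 ≤ q ∧ (k ≤ m → ∀ x ∈ Ω \ E,
      ‖iteratedFDerivWithin ℝ k f (Ω \ E) x‖ ≤ B * infDist x E ^ (-q)) := by
    intro k; by_cases hk : k ≤ m
    · obtain ⟨B, hB, q, hq, hb⟩ := hfd k hk; exact ⟨B, hB, q, hq, fun _ => hb⟩
    · exact ⟨1, one_pos, 0, le_rfl, fun h => absurd h hk⟩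
  choose Bf hBfpos pf hpf hfb using hfd'
  set p : ℝ := (Finset.range (m+1)).sup' hmne pf with hpdef
  have hpk : ∀ k ≤ m, pf k ≤ p :=
    fun k hk => Finset.le_sup' pf (Finset.mem_range.2 (Nat.lt_succ_of_le hk))
  have hp0 : 0 ≤ p := le_trans (hpf 0) (hpk 0 (Nat.zero_le m))
  set B : ℝ := (Finset.range (m+1)).sup' hmne Bf with hBdef
  have hBk : ∀ k ≤ m, Bf k ≤ B :=
    fun k hk => Finset.le_sup' Bf (Finset.mem_range.2 (Nat.lt_succ_of_le hk))
  have hB0 : 0 < B := lt_of_lt_of_le (hBfpos 0) (hBk 0 (Nat.zero_le m))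
  -- choice of L
  set L : ℕ := m + 2 + ⌈p⌉₊ with hLdef
  have hL : (m:ℝ) + 2 + p ≤ L := by
    rw [hLdef]; push_cast
    have := Nat.le_ceil p
    linarith
  obtain ⟨c, hc, hcb⟩ := hpow L
  have hgL : ContDiffOn ℝ m (fun y => g y ^ L) (Ω \ E) := (hg.pow L).mono diff_subset
  have hfu : ContDiffOn ℝ m (fun y => f y * g y ^ L) (Ω \ E) := hf.mul hgL
  have hset : ∀ (j:ℕ) (φ : EuclideanSpace ℝ (Fin n) → ℂ), ∀ x ∈ Ω \ E,
      iteratedFDerivWithin ℝ j φ (Ω \ E) x = iteratedFDerivWithin ℝ j φ Ω x := by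
    intro j φ x hx
    rw [iteratedFDerivWithin_of_isOpen j hEcl hx, iteratedFDerivWithin_of_isOpen j hΩo hx.1]
  set M : ℝ := 2^m * (B * c * D ^ (p + (L:ℝ))) with hMdef
  have hDpL : 0 < D ^ (p + (L:ℝ)) := Real.rpow_pos_of_pos hD0 _
  have hM0 : 0 < M := by positivity
  -- the central estimate
  have hM : ∀ k ≤ m, ∀ x ∈ Ω \ E,
      ‖iteratedFDerivWithin ℝ k (fun y => f y * g y ^ L) (Ω \ E) x‖
        ≤ M * infDist x E ^ (2:ℝ) := by
    intro k hk x hx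
    have hd := hdpos x hx
    have hdD := hDd x hx.1
    have hmul := norm_iteratedFDerivWithin_mul_le (𝕜 := ℝ) hf hgL uΩE hx
      (n := k) (by exact_mod_cast hk)
    refine le_trans hmul ?_
    have hterm : ∀ i ∈ Finset.range (k+1),
        (k.choose i : ℝ) * ‖iteratedFDerivWithin ℝ i f (Ω \ E) x‖ *
          ‖iteratedFDerivWithin ℝ (k-i) (fun y => g y ^ L) (Ω \ E) x‖
        ≤ (k.choose i : ℝ) * ((B * c * D ^ (p + (L:ℝ))) * infDist x E ^ (2:ℝ)) := by
      intro i hi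
      have hik : i ≤ k := Nat.lt_succ_iff.1 (Finset.mem_range.1 hi)
      have him : i ≤ m := le_trans hik hk
      have hfi := hfb i him x hx
      have hgi : ‖iteratedFDerivWithin ℝ (k-i) (fun y => g y ^ L) (Ω \ E) x‖
          ≤ c * infDist x E ^ ((L:ℝ) - ((k-i:ℕ):ℝ)) := by
        rw [hset (k-i) _ x hx]
        exact hcb (k-i) (le_trans (Nat.sub_le _ _) hk) x hx
      have hkim : ((k-i:ℕ):ℝ) ≤ (m:ℝ) := by
        exact_mod_cast le_trans (Nat.sub_le _ _) hk
      have hkim0 : (0:ℝ) ≤ ((k-i:ℕ):ℝ) := Nat.cast_nonneg _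
      have hrpow : infDist x E ^ (-pf i) * infDist x E ^ ((L:ℝ) - ((k-i:ℕ):ℝ))
          ≤ D ^ (p + (L:ℝ)) * infDist x E ^ (2:ℝ) := by
        rw [← Real.rpow_add hd]
        apply aux_rpow hd hdD hD1
        · have h1 := hpk i him
          have h2 := hpf i
          linarith
        · have h1 := hpf i
          linarith
      calc (k.choose i : ℝ) * ‖iteratedFDerivWithin ℝ i f (Ω \ E) x‖ *
            ‖iteratedFDerivWithin ℝ (k-i) (fun y => g y ^ L) (Ω \ E) x‖
          ≤ ((k.choose i : ℝ) * (Bf i * infDist x E ^ (-pf i))) *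
              (c * infDist x E ^ ((L:ℝ) - ((k-i:ℕ):ℝ))) := by
            refine mul_le_mul (mul_le_mul_of_nonneg_left hfi (Nat.cast_nonneg _)) hgi
              (norm_nonneg _) ?_
            exact mul_nonneg (Nat.cast_nonneg _)
              (mul_nonneg (hBfpos i).le (Real.rpow_pos_of_pos hd (-pf i)).le)
        _ = (k.choose i : ℝ) * ((Bf i * c) *
              (infDist x E ^ (-pf i) * infDist x E ^ ((L:ℝ) - ((k-i:ℕ):ℝ)))) := by ring
        _ ≤ (k.choose i : ℝ) * ((B * c) * (D ^ (p + (L:ℝ)) * infDist x E ^ (2:ℝ))) := by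
            refine mul_le_mul_of_nonneg_left ?_ (Nat.cast_nonneg _)
            refine mul_le_mul (mul_le_mul_of_nonneg_right (hBk i him) hc.le) hrpow ?_ ?_
            · exact mul_nonneg (Real.rpow_pos_of_pos hd (-pf i)).le
                (Real.rpow_pos_of_pos hd ((L:ℝ) - ((k-i:ℕ):ℝ))).le
            · exact mul_nonneg hB0.le hc.le
        _ = (k.choose i : ℝ) * ((B * c * D ^ (p + (L:ℝ))) * infDist x E ^ (2:ℝ)) := by ring
    refine le_trans (Finset.sum_le_sum hterm) ?_
    rw [← Finset.sum_mul]
    have hsum : ∑ i ∈ Finset.range (k+1), (k.choose i : ℝ) = 2^k := by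
      rw [← Nat.cast_sum, Nat.sum_range_choose]; push_cast; ring
    rw [hsum]
    have h7 : (2:ℝ)^k ≤ 2^m := pow_le_pow_right₀ one_le_two hk
    have h8 : (0:ℝ) < (B * c * D ^ (p + (L:ℝ))) * infDist x E ^ (2:ℝ) :=
      mul_pos (mul_pos (mul_pos hB0 hc) hDpL) (Real.rpow_pos_of_pos hd _)
    calc (2:ℝ)^k * ((B * c * D ^ (p + (L:ℝ))) * infDist x E ^ (2:ℝ))
        ≤ 2^m * ((B * c * D ^ (p + (L:ℝ))) * infDist x E ^ (2:ℝ)) :=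
          mul_le_mul_of_nonneg_right h7 h8.le
      _ = M * infDist x E ^ (2:ℝ) := by rw [hMdef]; ring
  have hsq : ∀ x ∈ Ω \ E, infDist x E ^ (2:ℝ) = infDist x E * infDist x E := by
    intro x hx
    rw [show (2:ℝ) = ((2:ℕ):ℝ) by norm_num, Real.rpow_natCast]; ring
  have hKb : ∀ k ≤ m, ∀ x ∈ Ω \ E,
      ‖iteratedFDerivWithin ℝ k (fun y => f y * g y ^ L) (Ω \ E) x‖
        ≤ (M * D) * infDist x E := by
    intro k hk x hx
    have h1 := hM k hk x hx
    have hd := hdpos x hx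
    have hdD := hDd x hx.1
    rw [hsq x hx] at h1
    nlinarith [mul_pos hM0 hd]
  -- the extension

  set v : EuclideanSpace ℝ (Fin n) → ℂ := fun y => if y ∈ E then 0 else f y * g y ^ L
    with hvdef
  have hF1 : ∀ (k:ℕ), ∀ x ∈ Ω \ E, iteratedFDerivWithin ℝ k v Ω x
      = iteratedFDerivWithin ℝ k (fun y => f y * g y ^ L) (Ω \ E) x := by
    intro k x hx
    have h1 : Ω =ᶠ[nhds x] (Ω \ E) := by
      apply Filter.eventuallyEq_set.2
      filter_upwards [hEcl.mem_nhds hx] with y hy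
      exact ⟨fun _ => hy, fun hh => hh.1⟩
    rw [iteratedFDerivWithin_congr_set h1]
    exact iteratedFDerivWithin_congr (fun y (hy : y ∈ Ω \ E) => if_neg hy.2) hx k
  have hvw : ∀ (k:ℕ), ∀ x ∈ Ω \ E, iteratedFDerivWithin ℝ k v Ω
      =ᶠ[nhds x] iteratedFDerivWithin ℝ k (fun y => f y * g y ^ L) (Ω \ E) := by
    intro k x hx
    filter_upwards [hEcl.mem_nhds hx] with y hy
    exact hF1 k y hy
  have hstep : ∀ k : ℕ, k < m → (∀ a ∈ E, iteratedFDerivWithin ℝ k v Ω a = 0) →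
      DifferentiableOn ℝ (iteratedFDerivWithin ℝ k v Ω) Ω ∧
      ∀ a ∈ E, iteratedFDerivWithin ℝ (k+1) v Ω a = 0 := by
    intro k hk hzero
    have hvd : ∀ x ∈ Ω \ E, DifferentiableAt ℝ (iteratedFDerivWithin ℝ k v Ω) x := by
      intro x hx
      have hw : DifferentiableAt ℝ
          (iteratedFDerivWithin ℝ k (fun y => f y * g y ^ L) (Ω \ E)) x :=
        ((hfu.differentiableOn_iteratedFDerivWithin (by exact_mod_cast hk) uΩE) x hx
          ).differentiableAt (hEcl.mem_nhds hx)
      exact hw.congr_of_eventuallyEq (hvw k x hx)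
    have hvb : ∀ x ∈ Ω \ E, ‖iteratedFDerivWithin ℝ k v Ω x‖ ≤ (M*D) * infDist x E := by
      intro x hx; rw [hF1 k x hx]; exact hKb k hk.le x hx
    have hvD : ∀ x ∈ Ω \ E, ‖fderiv ℝ (iteratedFDerivWithin ℝ k v Ω) x‖
        ≤ (M*D) * infDist x E := by
      intro x hx
      rw [(hvw k x hx).fderiv_eq, ← fderivWithin_of_isOpen hEcl hx,
        norm_fderivWithin_iteratedFDerivWithin]
      exact hKb (k+1) hk x hx
    have hDE : ∀ a ∈ E, HasFDerivWithinAt (iteratedFDerivWithin ℝ k v Ω) 0 Ω a :=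
      fun a ha => zero_ext_hasFDeriv hΩo hEΩ hEcl ⟨e₀, he₀⟩
        (mul_nonneg hM0.le hD0.le) hdpos hzero hvd hvb hvD ha
    constructor
    · intro x hx
      by_cases hxE : x ∈ E
      · exact (hDE x hxE).differentiableWithinAt
      · exact (hvd x ⟨hx, hxE⟩).differentiableWithinAt
    · intro a ha
      have h0 : fderivWithin ℝ (iteratedFDerivWithin ℝ k v Ω) Ω a = 0 :=
        (hDE a ha).fderivWithin (uΩ a (hEΩ ha))
      have h1 : ‖iteratedFDerivWithin ℝ (k+1) v Ω a‖ = 0 := by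
        rw [← norm_fderivWithin_iteratedFDerivWithin, h0]; exact ContinuousLinearMap.opNorm_zero
      exact norm_eq_zero.1 h1
  have hzeroAll : ∀ k : ℕ, k ≤ m → ∀ a ∈ E, iteratedFDerivWithin ℝ k v Ω a = 0 := by
    intro k
    induction k with
    | zero =>
      intro _ a ha
      have h1 : ‖iteratedFDerivWithin ℝ 0 v Ω a‖ = 0 := by
        rw [norm_iteratedFDerivWithin_zero, hvdef]
        simp [ha]
      exact norm_eq_zero.1 h1
    | succ k ih =>
      intro hk
      exact (hstep k (Nat.lt_of_succ_le hk) (ih (Nat.le_of_succ_le hk))).2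
  have hcontAll : ∀ k : ℕ, k ≤ m → ContinuousOn (iteratedFDerivWithin ℝ k v Ω) Ω := by
    intro k hk x hx
    by_cases hxE : x ∈ E
    · have hbound : ∀ᶠ y in nhdsWithin x Ω,
          ‖iteratedFDerivWithin ℝ k v Ω y‖ ≤ (M*D) * infDist y E := by
        filter_upwards [self_mem_nhdsWithin] with y hy
        by_cases hyE : y ∈ E
        · rw [hzeroAll k hk y hyE, norm_zero]
          exact mul_nonneg (mul_nonneg hM0.le hD0.le) infDist_nonneg
        · rw [hF1 k y ⟨hy, hyE⟩]; exact hKb k hk y ⟨hy, hyE⟩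
      have htend : Tendsto (fun y => (M*D) * infDist y E) (nhdsWithin x Ω) (nhds 0) := by
        have h2 : Tendsto (fun y => (M*D) * infDist y E) (nhds x)
            (nhds ((M*D) * infDist x E)) :=
          (continuous_const.mul (continuous_infDist_pt E)).tendsto x
        have h3 := h2.mono_left (nhdsWithin_le_nhds (s := Ω))
        rwa [infDist_zero_of_mem hxE, mul_zero] at h3
      have hnorm : Tendsto (iteratedFDerivWithin ℝ k v Ω) (nhdsWithin x Ω) (nhds 0) := by
        rw [tendsto_zero_iff_norm_tendsto_zero]
        exact squeeze_zero' (Eventually.of_forall fun y => norm_nonneg _) hbound htend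
      have h3 : iteratedFDerivWithin ℝ k v Ω x = 0 := hzeroAll k hk x hxE
      unfold ContinuousWithinAt
      rw [h3]
      exact hnorm
    · have hwc : ContinuousAt
          (iteratedFDerivWithin ℝ k (fun y => f y * g y ^ L) (Ω \ E)) x :=
        (hfu.continuousOn_iteratedFDerivWithin (by exact_mod_cast hk) uΩE).continuousAt
          (hEcl.mem_nhds ⟨hx, hxE⟩)
      exact (hwc.congr_of_eventuallyEq (hvw k x ⟨hx, hxE⟩)).continuousWithinAt
  have hcd : ContDiffOn ℝ (m:ℕ∞) v Ω := by
    apply contDiffOn_of_continuousOn_differentiableOn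
    · intro j hj
      exact hcontAll j (by exact_mod_cast hj)
    · intro j hj
      have hjm : j < m := by exact_mod_cast hj
      exact (hstep j hjm (hzeroAll j hjm.le)).1
  refine ⟨L, v, fun x hx => if_neg hx.2, fun x hx => if_pos hx, by exact_mod_cast hcd, ?_⟩
  intro k hk
  refine ⟨M * (D * D), ?_⟩
  intro x hx
  by_cases hxE : x ∈ E
  · rw [hzeroAll k hk x hxE, norm_zero]
    exact mul_nonneg hM0.le (mul_nonneg hD0.le hD0.le)
  · rw [hF1 k x ⟨hx, hxE⟩]
    have h1 := hM k hk x ⟨hx, hxE⟩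
    have hd := hdpos x ⟨hx, hxE⟩
    have hdD := hDd x hx
    rw [hsq x ⟨hx, hxE⟩] at h1
    have h2 : M * (infDist x E * infDist x E) ≤ M * (D * D) :=
      mul_le_mul_of_nonneg_left (mul_le_mul hdD hdD hd.le hD0.le) hM0.le
    linarith
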